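/- Let J, R, Q be real n×n matrices with Jᵀ = −J, R positive semidefinite, and Q positive semidefinite, and let M denote the matrix (J − R)Q viewed as a complex n×n matrix. Let λ ∈ ℂ with λ ≠ 0 and Re(λ) = 0, and suppose x₀, x₁ ∈ ℂⁿ satisfy Mx₀ = λx₀ and (M − λI)x₁ = x₀. Then x₀ = 0 (i.e., λ admits no Jordan chain of length 2). -/

import Mathlib

open Matrix
open scoped ComplexOrder

/-- The complexification of a real matrix. -/
noncomputable def toC {n : ℕ} (A : Matrix (Fin n) (Fin n) ℝ) : Matrix (Fin n) (Fin n) ℂ :=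
  A.map (fun a => (a : ℂ))

lemma toC_mul {n : ℕ} (A B : Matrix (Fin n) (Fin n) ℝ) :
    toC (A * B) = toC A * toC B := by
  ext i j
  simp [toC, Matrix.mul_apply]

lemma toC_sub {n : ℕ} (A B : Matrix (Fin n) (Fin n) ℝ) :
    toC (A - B) = toC A - toC B := by
  ext i j
  simp [toC]

lemma toC_conjTranspose {n : ℕ} (A : Matrix (Fin n) (Fin n) ℝ) :
    (toC A)ᴴ = toC Aᵀ := by
  ext i j
  simp [toC, Matrix.conjTranspose_apply]

lemma toC_posSemidef {n : ℕ} {A : Matrix (Fin n) (Fin n) ℝ} (hA : A.PosSemidef) :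
    (toC A).PosSemidef := by
  obtain ⟨B, rfl⟩ : ∃ B : Matrix (Fin n) (Fin n) ℝ, A = Bᴴ * B := by
    classical
    open scoped MatrixOrder in
    obtain ⟨X, hX, -, hXA⟩ := CFC.exists_sqrt_of_isSelfAdjoint_of_quasispectrumRestricts
      hA.isHermitian (QuasispectrumRestricts.nnreal_of_nonneg hA.nonneg)
    exact ⟨X, by rw [← hXA, ← Matrix.star_eq_conjTranspose, hX.star_eq]⟩
  have hBc : toC Bᴴ = (toC B)ᴴ := by
    ext i j
    simp [toC, Matrix.conjTranspose_apply]
  rw [toC_mul, hBc]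
  exact Matrix.posSemidef_conjTranspose_mul_self _

/-- conjugation identity for complex dot products. -/
lemma dot_conj {n : ℕ} (M : Matrix (Fin n) (Fin n) ℂ) (x y : Fin n → ℂ) :
    star (star x ⬝ᵥ M *ᵥ y) = star y ⬝ᵥ Mᴴ *ᵥ x := by
  have h1 : star x ⬝ᵥ M *ᵥ y = star (star (M *ᵥ y) ⬝ᵥ x) := star_dotProduct _ _
  rw [h1, star_star, star_mulVec, dotProduct_mulVec]

theorem no_jordan_chain_of_length_two {n : ℕ} (J R Q : Matrix (Fin n) (Fin n) ℝ)
    (hJ : Jᵀ = -J) (hR : R.PosSemidef) (hQ : Q.PosSemidef)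
    (μ : ℂ) (hμ0 : μ ≠ 0) (hμ : μ.re = 0) (x₀ x₁ : Fin n → ℂ)
    (h₀ : toC ((J - R) * Q) *ᵥ x₀ = μ • x₀)
    (h₁ : (toC ((J - R) * Q) - μ • 1) *ᵥ x₁ = x₀) :
    x₀ = 0 := by
  set J' := toC J with hJ'
  set R' := toC R with hR'
  set Q' := toC Q with hQ'
  have hRp : R'.PosSemidef := toC_posSemidef hR
  have hQp : Q'.PosSemidef := toC_posSemidef hQ
  have hQherm : Q'ᴴ = Q' := hQp.1
  have hRherm : R'ᴴ = R' := hRp.1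
  have hJskew : J'ᴴ = -J' := by
    rw [hJ', toC_conjTranspose, hJ]
    ext i j; simp [toC]
  have hM : toC ((J - R) * Q) = (J' - R') * Q' := by
    rw [toC_mul, toC_sub]
  rw [hM] at h₀ h₁
  set z : Fin n → ℂ := Q' *ᵥ x₀ with hz
  have key : star x₀ ᵥ* Q' = star z := by
    rw [hz, star_mulVec, hQherm]
  have hA0 : (J' - R') *ᵥ z = μ • x₀ := by
    rw [hz, mulVec_mulVec, h₀]
  set s : ℂ := star x₀ ⬝ᵥ z with hs
  have hs_star : star s = s := by
    rw [hs, hz, dot_conj, hQherm]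
  have hs_im : s.im = 0 := by
    have := congrArg Complex.im hs_star
    simp [Complex.star_def] at this
    linarith
  have hzx : star z ⬝ᵥ x₀ = s := by
    rw [← key, ← dotProduct_mulVec, hs, hz]
  have hT : star z ⬝ᵥ ((J' - R') *ᵥ z) = μ * s := by
    rw [hA0, dotProduct_smul, smul_eq_mul, hzx]
  have hJim : (star z ⬝ᵥ J' *ᵥ z).re = 0 := by
    have h1 : star (star z ⬝ᵥ J' *ᵥ z) = -(star z ⬝ᵥ J' *ᵥ z) := by
      rw [dot_conj, hJskew, Matrix.neg_mulVec, dotProduct_neg]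
    have := congrArg Complex.re h1
    simp [Complex.star_def] at this
    linarith
  have hRre : star z ⬝ᵥ R' *ᵥ z = 0 := by
    have hsplit : star z ⬝ᵥ ((J' - R') *ᵥ z)
        = star z ⬝ᵥ (J' *ᵥ z) - star z ⬝ᵥ (R' *ᵥ z) := by
      rw [Matrix.sub_mulVec, dotProduct_sub]
    have hre : (star z ⬝ᵥ R' *ᵥ z).re = 0 := by
      have h2 := congrArg Complex.re (hsplit.symm.trans hT)
      simp [Complex.mul_re, hμ, hs_im, hJim] at h2
      linarith
    have him : (star z ⬝ᵥ R' *ᵥ z).im = 0 := by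
      have h3 : star (star z ⬝ᵥ R' *ᵥ z) = star z ⬝ᵥ R' *ᵥ z := by
        rw [dot_conj, hRherm]
      have := congrArg Complex.im h3
      simp [Complex.star_def] at this
      linarith
    exact Complex.ext hre him
  have hRz : R' *ᵥ z = 0 := (hRp.dotProduct_mulVec_zero_iff z).mp hRre
  have hJz : J' *ᵥ z = μ • x₀ := by
    rw [Matrix.sub_mulVec, hRz, sub_zero] at hA0
    exact hA0
  have hμstar : star μ = -μ := by
    apply Complex.ext <;> simp [Complex.star_def, hμ]
  have hvec : star z ᵥ* (J' - R') = μ • star x₀ := by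
    have h4 : star ((J' - R')ᴴ *ᵥ z) = star z ᵥ* (J' - R') :=
      (star_mulVec _ _).trans (by rw [conjTranspose_conjTranspose])
    rw [← h4, conjTranspose_sub, hJskew, hRherm, Matrix.sub_mulVec, Matrix.neg_mulVec,
      hJz, hRz, sub_zero, star_neg, star_smul, hμstar, neg_smul, neg_neg]
  have hs0 : s = 0 := by
    have e1 : s = star z ⬝ᵥ (((J' - R') * Q' - μ • 1) *ᵥ x₁) := by
      rw [h₁]; exact hzx.symm
    rw [Matrix.sub_mulVec, dotProduct_sub, Matrix.smul_mulVec, Matrix.one_mulVec,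
      dotProduct_smul, smul_eq_mul, ← mulVec_mulVec, dotProduct_mulVec, hvec,
      smul_dotProduct, smul_eq_mul, ← key, ← dotProduct_mulVec, sub_self] at e1
    exact e1
  have hQx : Q' *ᵥ x₀ = 0 := by
    refine (hQp.dotProduct_mulVec_zero_iff x₀).mp ?_
    rw [← hz, ← hs]; exact hs0
  have hzero : μ • x₀ = 0 := by
    rw [← h₀, ← mulVec_mulVec, hQx, mulVec_zero]
  rcases smul_eq_zero.mp hzero with h | h
  · exact absurd h hμ0
  · exact h
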